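/- For integers m, n ≥ 1 with m + n ≥ 3, if the spider Sp(1^[m], 2^[n]) admits a local antimagic total labeling with exactly 2 distinct vertex weights, then (m+n)² − 5(m+n) − 4(n+1) ≤ 0. -/

import Mathlib

open Finset

variable {V : Type*} [Fintype V] [DecidableEq V]

/-- The weight of a vertex `u` under the total labeling given by vertex labels `fv`
and edge labels `fe` : `w(u) = f(u) + \sum_{e incident to u} f(e)`. -/
def latWeight (G : SimpleGraph V) [DecidableRel G.Adj]
    (fv : V → ℕ) (fe : Sym2 V → ℕ) (u : V) : ℕ :=
  fv u + ∑ v ∈ G.neighborFinset u, fe s(u, v)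

/-- `fv, fe` together form a bijection from `V(G) ∪ E(G)` onto `{1, …, p + q}`,
where `p` is the order and `q` is the size of `G`. -/
def IsTotalLabeling (G : SimpleGraph V) [DecidableRel G.Adj]
    (fv : V → ℕ) (fe : Sym2 V → ℕ) : Prop :=
  Set.BijOn (Sum.elim fv (fun e : G.edgeSet => fe (e : Sym2 V))) Set.univ
    (Set.Icc 1 (Fintype.card V + G.edgeFinset.card))

/-- A local antimagic total labeling of `G` : a bijective total labeling such that any two
adjacent vertices get distinct weights. -/
def IsLocalAntimagicTotal (G : SimpleGraph V) [DecidableRel G.Adj]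
    (fv : V → ℕ) (fe : Sym2 V → ℕ) : Prop :=
  IsTotalLabeling G fv fe ∧
    ∀ ⦃u v : V⦄, G.Adj u v → latWeight G fv fe u ≠ latWeight G fv fe v

/-- The local antimagic total chromatic number `χ_lat(G)` : the minimum number of distinct
vertex weights taken over all local antimagic total labelings of `G`. -/
noncomputable def chiLat (G : SimpleGraph V) [DecidableRel G.Adj] : ℕ :=
  sInf {c | ∃ fv fe, IsLocalAntimagicTotal G fv fe ∧
    (Finset.univ.image (latWeight G fv fe)).card = c}

instance {W : Type*} (r : W → W → Prop) [DecidableEq W] [DecidableRel r] :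
    DecidableRel (SimpleGraph.fromRel r).Adj :=
  fun a b => decidable_of_iff _ (SimpleGraph.fromRel_adj r a b).symm

/-- Adjacency for the spider `Sp(1^[m], 2^[n])` : the center `x = none` is adjacent to each
leaf `y i = some (Sum.inl i)` and to each `u j = some (Sum.inr (j, false))`, and each `u j`
is adjacent to the leaf `v j = some (Sum.inr (j, true))`. -/
def spider12R (m n : ℕ) :
    Option (Fin m ⊕ Fin n × Bool) → Option (Fin m ⊕ Fin n × Bool) → Bool
  | none, some (Sum.inl _) => true
  | none, some (Sum.inr (_, false)) => true
  | some (Sum.inr (j, false)), some (Sum.inr (j', true)) => decide (j = j')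
  | _, _ => false

/-- The spider `Sp(1^[m], 2^[n])` with `m` legs of length `1` and `n` legs of length `2`. -/
abbrev spider12 (m n : ℕ) : SimpleGraph (Option (Fin m ⊕ Fin n × Bool)) :=
  SimpleGraph.fromRel (fun a b => spider12R m n a b = true)

-- auxiliary
section Aux
variable (m n : ℕ)

lemma spider_adj (a b : Option (Fin m ⊕ Fin n × Bool)) :
    (spider12 m n).Adj a b ↔
      (a = none ∧ ∃ i, b = some (Sum.inl i)) ∨
      (b = none ∧ ∃ i, a = some (Sum.inl i)) ∨
      (a = none ∧ ∃ j, b = some (Sum.inr (j, false))) ∨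
      (b = none ∧ ∃ j, a = some (Sum.inr (j, false))) ∨
      (∃ j, a = some (Sum.inr (j, false)) ∧ b = some (Sum.inr (j, true))) ∨
      (∃ j, b = some (Sum.inr (j, false)) ∧ a = some (Sum.inr (j, true))) := by
  rw [SimpleGraph.fromRel_adj]
  constructor
  · rintro ⟨hne, hr | hr⟩ <;>
      rcases a with _ | (i | ⟨j, _ | _⟩) <;> rcases b with _ | (i' | ⟨j', _ | _⟩) <;>
      simp_all [spider12R]
  · rintro (⟨rfl, i, rfl⟩ | ⟨rfl, i, rfl⟩ | ⟨rfl, j, rfl⟩ | ⟨rfl, j, rfl⟩ |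
      ⟨j, rfl, rfl⟩ | ⟨j, rfl, rfl⟩) <;>
      simp [spider12R]
end Aux

section Aux2
variable (m n : ℕ)

lemma adj_none_u (j : Fin n) :
    (spider12 m n).Adj none (some (Sum.inr (j, false))) := by
  rw [spider_adj]; tauto

lemma adj_u_v (j : Fin n) :
    (spider12 m n).Adj (some (Sum.inr (j, false))) (some (Sum.inr (j, true))) := by
  rw [spider_adj]
  exact Or.inr (Or.inr (Or.inr (Or.inr (Or.inl ⟨j, rfl, rfl⟩))))

lemma nbr_none : (spider12 m n).neighborFinset none =
    (univ.image fun i : Fin m => (some (Sum.inl i) : Option (Fin m ⊕ Fin n × Bool))) ∪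
    (univ.image fun j : Fin n => (some (Sum.inr (j, false)) : Option (Fin m ⊕ Fin n × Bool))) := by
  ext b
  rw [SimpleGraph.mem_neighborFinset, spider_adj]
  simp only [mem_union, mem_image, mem_univ, true_and]
  constructor
  · rintro (⟨_, i, rfl⟩ | ⟨_, i, h⟩ | ⟨_, j, rfl⟩ | ⟨_, j, h⟩ | ⟨j, h, _⟩ | ⟨j, _, h⟩) <;>
      simp_all
  · rintro (⟨i, rfl⟩ | ⟨j, rfl⟩) <;> simp

lemma card_nbr_none : ((spider12 m n).neighborFinset none).card = m + n := by
  rw [nbr_none, Finset.card_union_of_disjoint, Finset.card_image_of_injective,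
    Finset.card_image_of_injective] <;>
    simp [Finset.disjoint_left, Function.Injective]

lemma nbr_v (j : Fin n) : (spider12 m n).neighborFinset (some (Sum.inr (j, true))) =
    {some (Sum.inr (j, false))} := by
  ext b
  rw [SimpleGraph.mem_neighborFinset, spider_adj]
  simp only [mem_singleton]
  constructor
  · rintro (⟨h, _⟩ | ⟨_, i, h⟩ | ⟨h, _⟩ | ⟨_, j', h⟩ | ⟨j', h, _⟩ | ⟨j', rfl, h⟩) <;>
      simp_all
  · rintro rfl
    exact Or.inr (Or.inr (Or.inr (Or.inr (Or.inr ⟨j, rfl, rfl⟩))))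

def edgeMap (m n : ℕ) : Fin m ⊕ Fin n × Bool → Sym2 (Option (Fin m ⊕ Fin n × Bool))
  | Sum.inl i => s(none, some (Sum.inl i))
  | Sum.inr (j, false) => s(none, some (Sum.inr (j, false)))
  | Sum.inr (j, true) => s(some (Sum.inr (j, false)), some (Sum.inr (j, true)))

lemma edgeFinset_eq : (spider12 m n).edgeFinset = univ.image (edgeMap m n) := by
  ext e
  induction e with
  | _ a b =>
    rw [SimpleGraph.mem_edgeFinset, SimpleGraph.mem_edgeSet, spider_adj]
    simp only [mem_image, mem_univ, true_and]
    constructor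
    · rintro (⟨rfl, i, rfl⟩ | ⟨rfl, i, rfl⟩ | ⟨rfl, j, rfl⟩ | ⟨rfl, j, rfl⟩ |
        ⟨j, rfl, rfl⟩ | ⟨j, rfl, rfl⟩)
      · exact ⟨Sum.inl i, rfl⟩
      · exact ⟨Sum.inl i, Sym2.eq_swap⟩
      · exact ⟨Sum.inr (j, false), rfl⟩
      · exact ⟨Sum.inr (j, false), Sym2.eq_swap⟩
      · exact ⟨Sum.inr (j, true), rfl⟩
      · exact ⟨Sum.inr (j, true), Sym2.eq_swap⟩
    · rintro ⟨k, hk⟩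
      rcases k with i | ⟨j, _ | _⟩ <;>
        simp only [edgeMap, Sym2.eq_iff] at hk <;> rcases hk with ⟨rfl, rfl⟩ | ⟨rfl, rfl⟩
      · exact Or.inl ⟨rfl, i, rfl⟩
      · exact Or.inr (Or.inl ⟨rfl, i, rfl⟩)
      · exact Or.inr (Or.inr (Or.inl ⟨rfl, j, rfl⟩))
      · exact Or.inr (Or.inr (Or.inr (Or.inl ⟨rfl, j, rfl⟩)))
      · exact Or.inr (Or.inr (Or.inr (Or.inr (Or.inl ⟨j, rfl, rfl⟩))))
      · exact Or.inr (Or.inr (Or.inr (Or.inr (Or.inr ⟨j, rfl, rfl⟩))))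

lemma edgeMap_inj : Function.Injective (edgeMap m n) := by
  rintro (i | ⟨j, _ | _⟩) (i' | ⟨j', _ | _⟩) h <;>
    simp only [edgeMap, Sym2.eq_iff] at h <;>
    rcases h with ⟨h1, h2⟩ | ⟨h1, h2⟩ <;> simp_all

lemma card_edges : (spider12 m n).edgeFinset.card = m + 2 * n := by
  rw [edgeFinset_eq, Finset.card_image_of_injective _ (edgeMap_inj m n)]
  simp [Fintype.card_sum]; ring

lemma card_verts : Fintype.card (Option (Fin m ⊕ Fin n × Bool)) = m + 2 * n + 1 := by
  simp [Fintype.card_sum]; ring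

end Aux2

lemma sum_lower (T : Finset ℕ) (h1 : ∀ x ∈ T, 1 ≤ x) :
    T.card * (T.card + 1) ≤ 2 * ∑ x ∈ T, x := by
  induction T using Finset.induction_on_max with
  | empty => simp
  | insert a s ha ih =>
    have hns : ∀ x ∈ s, 1 ≤ x := fun x hx => h1 x (mem_insert_of_mem hx)
    have hsub : s ⊆ Icc 1 (a - 1) := fun x hx =>
      mem_Icc.mpr ⟨hns x hx, Nat.le_sub_one_of_lt (ha x hx)⟩
    have hcard : s.card ≤ a - 1 := by
      simpa [Nat.card_Icc] using Finset.card_le_card hsub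
    have ha1 : 1 ≤ a := h1 a (mem_insert_self a s)
    have hca : s.card + 1 ≤ a := by omega
    have hnot : a ∉ s := fun hx => lt_irrefl a (ha a hx)
    rw [Finset.sum_insert hnot, Finset.card_insert_of_notMem hnot]
    have := ih hns
    nlinarith

lemma gauss (N : ℕ) : 2 * ∑ x ∈ Icc 1 N, x = N * (N + 1) := by
  induction N with
  | zero => simp
  | succ k ih =>
    have : Icc 1 (k+1) = insert (k+1) (Icc 1 k) := by
      ext x; simp [Finset.mem_Icc]; omega
    rw [this, Finset.sum_insert (by simp), Nat.mul_add, ih]; ring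

lemma sum_upper (N : ℕ) (T : Finset ℕ) (hsub : T ⊆ Icc 1 N) :
    2 * ∑ x ∈ T, x + (N - T.card) * (N - T.card + 1) ≤ N * (N + 1) := by
  have hdisj := Finset.sum_sdiff (f := id) hsub
  have hc : (Icc 1 N \ T).card = N - T.card := by
    rw [Finset.card_sdiff_of_subset hsub, Nat.card_Icc]; omega
  have hlow := sum_lower (Icc 1 N \ T) (fun x hx => (mem_Icc.mp (mem_sdiff.mp hx).1).1)
  rw [hc] at hlow
  have hg := gauss N
  simp only [id] at hdisj
  omega

lemma eq_of_card_two {s : Finset ℕ} (hs : s.card = 2) {a b c : ℕ}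
    (ha : a ∈ s) (hb : b ∈ s) (hc : c ∈ s) (hab : a ≠ b) (hcb : c ≠ b) : c = a := by
  obtain ⟨x, y, hxy, rfl⟩ := Finset.card_eq_two.mp hs
  simp only [Finset.mem_insert, Finset.mem_singleton] at ha hb hc
  rcases ha with rfl|rfl <;> rcases hb with rfl|rfl <;> rcases hc with rfl|rfl <;> simp_all

set_option maxHeartbeats 1000000 in
/-- For `m, n ≥ 1` with `m + n ≥ 3`, if the spider `Sp(1^[m], 2^[n])` admits a local
antimagic total labeling with exactly `2` distinct vertex weights, then
`(m+n)² − 5(m+n) − 4(n+1) ≤ 0`. -/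
theorem spider12_two_weights_ineq (m n : ℕ) (hm : 1 ≤ m) (hn : 1 ≤ n) (hmn : 3 ≤ m + n)
    (h : ∃ fv fe, IsLocalAntimagicTotal (spider12 m n) fv fe ∧
      (Finset.univ.image (latWeight (spider12 m n) fv fe)).card = 2) :
    ((m : ℤ) + n) ^ 2 - 5 * ((m : ℤ) + n) - 4 * ((n : ℤ) + 1) ≤ 0 := by
  obtain ⟨fv, fe, ⟨htl, hw⟩, hcard⟩ := h
  set G := spider12 m n with hG
  set N : ℕ := 2 * m + 4 * n + 1 with hNdef
  have hN : Fintype.card (Option (Fin m ⊕ Fin n × Bool)) + G.edgeFinset.card = N := by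
    rw [card_verts, card_edges]; omega
  have hmap := htl.1
  have hinj : Function.Injective
      (Sum.elim fv (fun e : G.edgeSet => fe (e : Sym2 _))) :=
    Set.injOn_univ.mp htl.2.1
  -- basic label facts
  have hfv_bounds : ∀ u, 1 ≤ fv u ∧ fv u ≤ N := by
    intro u
    have := hmap (Set.mem_univ (Sum.inl u))
    rw [hN] at this
    exact this
  have hfe_bounds : ∀ e ∈ G.edgeSet, 1 ≤ fe e ∧ fe e ≤ N := by
    intro e he
    have := hmap (Set.mem_univ (Sum.inr (⟨e, he⟩ : G.edgeSet)))
    rw [hN] at this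
    exact this
  have hfvfe : ∀ u, ∀ e ∈ G.edgeSet, fv u ≠ fe e := by
    intro u e he hEq
    have := @hinj (Sum.inl u) (Sum.inr (⟨e, he⟩ : G.edgeSet)) hEq
    simp at this
  have hfe_inj : ∀ e ∈ G.edgeSet, ∀ e' ∈ G.edgeSet, fe e = fe e' → e = e' := by
    intro e he e' he' hEq
    have := @hinj (Sum.inr (⟨e, he⟩ : G.edgeSet)) (Sum.inr (⟨e', he'⟩ : G.edgeSet)) hEq
    simpa using this
  have hfv_inj : Function.Injective fv := by
    intro u u' hEq
    have := @hinj (Sum.inl u) (Sum.inl u') hEq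
    simpa using this
  -- weights
  set w := latWeight G fv fe with hwdef
  have hveq : ∀ j : Fin n, w (some (Sum.inr (j, true))) = w none := by
    intro j
    refine eq_of_card_two hcard (b := w (some (Sum.inr (j, false))))
      (Finset.mem_image_of_mem w (mem_univ _)) (Finset.mem_image_of_mem w (mem_univ _))
      (Finset.mem_image_of_mem w (mem_univ _)) (hw (adj_none_u m n j))
      (Ne.symm (hw (adj_u_v m n j)))
  -- formula for w (v j)
  have hwv : ∀ j : Fin n, w (some (Sum.inr (j, true))) =
      fv (some (Sum.inr (j, true))) +
        fe s(some (Sum.inr (j, false)), some (Sum.inr (j, true))) := by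
    intro j
    rw [hwdef]
    show fv _ + _ = _
    rw [nbr_v, Finset.sum_singleton, Sym2.eq_swap]
  -- lower bound for a := w none
  set a := w none with hadef
  have hlower : (m + n + 1) * (m + n + 2) ≤ 2 * a := by
    set T1 : Finset ℕ := insert (fv none)
      ((G.neighborFinset none).image fun b => fe s(none, b)) with hT1
    have hedge : ∀ b ∈ G.neighborFinset none, s(none, b) ∈ G.edgeSet := by
      intro b hb
      exact G.mem_edgeSet.mpr ((G.mem_neighborFinset _ _).mp hb)
    have hinjOn : ∀ b ∈ G.neighborFinset none, ∀ b' ∈ G.neighborFinset none,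
        fe s(none, b) = fe s(none, b') → b = b' := by
      intro b hb b' hb' hEq
      have := hfe_inj _ (hedge b hb) _ (hedge b' hb') hEq
      rw [Sym2.eq_iff] at this
      rcases this with ⟨_, h2⟩ | ⟨h1, h2⟩
      · exact h2
      · exfalso
        exact (((G.mem_neighborFinset _ _).mp hb').ne' h1.symm).elim
    have hnotmem : fv none ∉ (G.neighborFinset none).image fun b => fe s(none, b) := by
      intro hmem
      obtain ⟨b, hb, hEq⟩ := Finset.mem_image.mp hmem
      exact hfvfe none _ (hedge b hb) hEq.symm
    have hcardT1 : T1.card = m + n + 1 := by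
      rw [hT1, Finset.card_insert_of_notMem hnotmem, Finset.card_image_of_injOn hinjOn,
        card_nbr_none]
    have hsumT1 : ∑ x ∈ T1, x = a := by
      rw [hT1, Finset.sum_insert hnotmem, Finset.sum_image hinjOn]
      rfl
    have hge1 : ∀ x ∈ T1, 1 ≤ x := by
      intro x hx
      rw [hT1, Finset.mem_insert] at hx
      rcases hx with rfl | hx
      · exact (hfv_bounds none).1
      · obtain ⟨b, hb, rfl⟩ := Finset.mem_image.mp hx
        exact (hfe_bounds _ (hedge b hb)).1
    have := sum_lower T1 hge1
    rw [hcardT1, hsumT1] at this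
    calc (m + n + 1) * (m + n + 2) = (m + n + 1) * ((m + n + 1) + 1) := by ring
    _ ≤ 2 * a := this
  -- upper bound via the 2n labels on the pendant edges/leaves
  have hupper : 2 * (n * a) + (2 * m + 2 * n + 1) * (2 * m + 2 * n + 2) ≤ N * (N + 1) := by
    set g : Fin n × Bool → ℕ := fun p =>
      if p.2 then fv (some (Sum.inr (p.1, true)))
      else fe s(some (Sum.inr (p.1, false)), some (Sum.inr (p.1, true))) with hg
    have hedge2 : ∀ j : Fin n,
        s(some (Sum.inr (j, false)), some (Sum.inr (j, true))) ∈ G.edgeSet :=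
      fun j => G.mem_edgeSet.mpr (adj_u_v m n j)
    have hginj : Function.Injective g := by
      rintro ⟨j, bj⟩ ⟨k, bk⟩ hEq
      rcases bj <;> rcases bk <;> simp only [hg, if_true, if_false, Bool.false_eq_true] at hEq
      · have h2 := hfe_inj _ (hedge2 j) _ (hedge2 k) hEq
        rw [Sym2.eq_iff] at h2
        rcases h2 with ⟨h1, _⟩ | ⟨h1, _⟩
        · obtain rfl : j = k := by simpa using h1
          rfl
        · exact absurd h1 (by simp)
      · exact absurd hEq.symm (hfvfe _ _ (hedge2 j))
      · exact absurd hEq (hfvfe _ _ (hedge2 k))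
      · have h2 := hfv_inj hEq
        obtain rfl : j = k := by simpa using h2
        rfl
    set T2 : Finset ℕ := univ.image g with hT2
    have hcardT2 : T2.card = 2 * n := by
      rw [hT2, Finset.card_image_of_injective _ hginj, Finset.card_univ,
        Fintype.card_prod, Fintype.card_fin, Fintype.card_bool]
      ring
    have hsub2 : T2 ⊆ Icc 1 N := by
      intro x hx
      obtain ⟨⟨j, b⟩, _, rfl⟩ := Finset.mem_image.mp hx
      rcases b <;> simp only [hg, if_true, if_false, Bool.false_eq_true] <;> rw [Finset.mem_Icc]
      · exact hfe_bounds _ (hedge2 j)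
      · exact hfv_bounds _
    have hsumT2 : ∑ x ∈ T2, x = n * a := by
      rw [hT2, Finset.sum_image (fun x _ y _ h => hginj h)]
      rw [Fintype.sum_prod_type]
      have : ∀ j : Fin n, ∑ b : Bool, g (j, b) = a := by
        intro j
        rw [Fintype.sum_bool]
        simp only [hg, if_true, Bool.false_eq_true, if_false]
        rw [← hveq j, hwv j]
      rw [Finset.sum_congr rfl fun j _ => this j]
      simp [mul_comm]
    have := sum_upper N T2 hsub2
    rw [hcardT2, hsumT2] at this
    have hNsub : N - 2 * n = 2 * m + 2 * n + 1 := by omega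
    rw [hNsub] at this
    convert this using 2
  -- combine
  have key : n * ((m + n + 1) * (m + n + 2)) + (2 * m + 2 * n + 1) * (2 * m + 2 * n + 2)
      ≤ N * (N + 1) := by
    calc n * ((m + n + 1) * (m + n + 2)) + (2 * m + 2 * n + 1) * (2 * m + 2 * n + 2)
        ≤ n * (2 * a) + (2 * m + 2 * n + 1) * (2 * m + 2 * n + 2) := by
          exact Nat.add_le_add_right (Nat.mul_le_mul_left n hlower) _
      _ = 2 * (n * a) + (2 * m + 2 * n + 1) * (2 * m + 2 * n + 2) := by ring
      _ ≤ N * (N + 1) := hupper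
  have keyZ : (n : ℤ) * ((m + n + 1) * (m + n + 2)) + (2 * m + 2 * n + 1) * (2 * m + 2 * n + 2)
      ≤ (2 * m + 4 * n + 1) * (2 * m + 4 * n + 2) := by
    have := key
    rw [hNdef] at this
    exact_mod_cast this
  have hnZ : (1 : ℤ) ≤ n := by exact_mod_cast hn
  nlinarith [keyZ, hnZ, sq_nonneg ((m : ℤ) + n)]
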